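/- Let J1, I22, I33, I23 be real numbers with J1 > 0, I22 > 0 and I23 ≠ 0, set J2 = ½(I22+I33) + ½√((I22−I33)²+4I23²) and J3 = ½(I22+I33) − ½√((I22−I33)²+4I23²), and assume J1 ≠ J2 and J1 ≠ J3. Let (ω1, ω2) : ℝ → ℝ² be a differentiable solution of the system J1 ω1' = −I23 ω2² + (I22 − I33) ω2 + I23, I22 ω2' = ω1 (I23 ω2 + I33 − J1). Then the function F(ω1, ω2) = (I23 ω2 + I33 − J1) · exp( I23² ( J1 ω1² + I22 (ω2 − (I22 − J1)/I23)² ) / ( 2 I22 (J1 − J2)(J1 − J3) ) ) is constant along the solution: F(ω1(τ), ω2(τ)) is independent of τ. -/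

import Mathlib

/-- The transcendental first integral `F` of the reduced inhomogeneous Suslov problem
in the generic case `J1 ≠ J2, J3` (with `I13 = 0`, `I23 ≠ 0`). -/
theorem suslov_transcendental_first_integral
    (J1 I22 I33 I23 J2 J3 : ℝ)
    (hJ1 : 0 < J1) (hI22 : 0 < I22) (hI23 : I23 ≠ 0)
    (hJ2 : J2 = (I22 + I33) / 2 + Real.sqrt ((I22 - I33) ^ 2 + 4 * I23 ^ 2) / 2)
    (hJ3 : J3 = (I22 + I33) / 2 - Real.sqrt ((I22 - I33) ^ 2 + 4 * I23 ^ 2) / 2)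
    (h12 : J1 ≠ J2) (h13 : J1 ≠ J3)
    (ω1 ω2 : ℝ → ℝ)
    (hω1 : ∀ τ : ℝ, HasDerivAt ω1
      ((-I23 * (ω2 τ) ^ 2 + (I22 - I33) * ω2 τ + I23) / J1) τ)
    (hω2 : ∀ τ : ℝ, HasDerivAt ω2
      (ω1 τ * (I23 * ω2 τ + I33 - J1) / I22) τ) :
    ∀ τ σ : ℝ,
      (I23 * ω2 τ + I33 - J1) *
        Real.exp (I23 ^ 2 * (J1 * (ω1 τ) ^ 2 + I22 * (ω2 τ - (I22 - J1) / I23) ^ 2) /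
          (2 * I22 * (J1 - J2) * (J1 - J3))) =
      (I23 * ω2 σ + I33 - J1) *
        Real.exp (I23 ^ 2 * (J1 * (ω1 σ) ^ 2 + I22 * (ω2 σ - (I22 - J1) / I23) ^ 2) /
          (2 * I22 * (J1 - J2) * (J1 - J3))) := by
  have hq : Real.sqrt ((I22 - I33) ^ 2 + 4 * I23 ^ 2) ^ 2
      = (I22 - I33) ^ 2 + 4 * I23 ^ 2 := Real.sq_sqrt (by positivity)
  have key : (J1 - J2) * (J1 - J3) = (I22 - J1) * (I33 - J1) - I23 ^ 2 := by
    subst hJ2 hJ3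
    linear_combination (-(1:ℝ)/4) * hq
  have h12' : J1 - J2 ≠ 0 := sub_ne_zero.mpr h12
  have h13' : J1 - J3 ≠ 0 := sub_ne_zero.mpr h13
  set g : ℝ → ℝ := fun t =>
    (I23 * ω2 t + I33 - J1) *
      Real.exp (I23 ^ 2 * (J1 * (ω1 t) ^ 2 + I22 * (ω2 t - (I22 - J1) / I23) ^ 2) /
        (2 * I22 * (J1 - J2) * (J1 - J3))) with hg
  have hderiv : ∀ t : ℝ, HasDerivAt g 0 t := by
    intro t
    set d1 := (-I23 * (ω2 t) ^ 2 + (I22 - I33) * ω2 t + I23) / J1 with hd1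
    set d2 := ω1 t * (I23 * ω2 t + I33 - J1) / I22 with hd2
    have hL : HasDerivAt (fun s => I23 * ω2 s + I33 - J1) (I23 * d2) t := by
      simpa using (((hω2 t).const_mul I23).add_const I33).sub_const J1
    have hX : HasDerivAt
        (fun s => I23 ^ 2 * (J1 * (ω1 s) ^ 2 + I22 * (ω2 s - (I22 - J1) / I23) ^ 2) /
          (2 * I22 * (J1 - J2) * (J1 - J3)))
        (I23 ^ 2 * (J1 * (2 * ω1 t * d1) + I22 * (2 * (ω2 t - (I22 - J1) / I23) * d2)) /
          (2 * I22 * (J1 - J2) * (J1 - J3))) t := by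
      have h1 : HasDerivAt (fun s => (ω1 s) ^ 2) (2 * ω1 t * d1) t := by
        have := (hω1 t).pow 2
        convert this using 1
        · rfl
        · rfl
        · rfl
        · rw [hd1]; push_cast; ring
      have h2 : HasDerivAt (fun s => (ω2 s - (I22 - J1) / I23) ^ 2)
          (2 * (ω2 t - (I22 - J1) / I23) * d2) t := by
        have := ((hω2 t).sub_const ((I22 - J1) / I23)).pow 2
        convert this using 1
        · rfl
        · rfl
        · rfl
        · rw [hd2]; push_cast; ring
      exact (((h1.const_mul J1).add (h2.const_mul I22)).const_mul (I23 ^ 2)).div_const _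
    have hD' : (I22 - J1) * (I33 - J1) - I23 ^ 2 ≠ 0 := by
      rw [← key]; exact mul_ne_zero h12' h13'
    have := hL.mul hX.exp
    convert this using 1
    · rfl
    · rfl
    · rfl
    rw [hd1, hd2]
    have hDD : 2 * I22 * (J1 - J2) * (J1 - J3)
        = 2 * I22 * ((I22 - J1) * (I33 - J1) - I23 ^ 2) := by
      linear_combination 2 * I22 * key
    rw [hDD]
    set E := Real.exp (I23 ^ 2 * (J1 * (ω1 t) ^ 2 +
        I22 * (ω2 t - (I22 - J1) / I23) ^ 2) / (2 * I22 * ((I22 - J1) * (I33 - J1) - I23 ^ 2)))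
    field_simp
    ring
  intro τ σ
  exact is_const_of_deriv_eq_zero (fun t => (hderiv t).differentiableAt)
    (fun t => (hderiv t).deriv) τ σ
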